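/- arXiv:2305.00362 — 2 statements merged into one kernel-verified Lean document; each statement's English description precedes it below -/
import Mathlib

section
/- For every real α, regret(λ̂, λ) ≤ max_{P ∈ Φ} (α λ̂ - λ)^T P - α c*(λ̂) + c*(λ), where c*(c) = max_{P∈Φ} c^T P over a nonempty compact set Φ and regret(λ̂, λ) = λ^T P*(λ) - λ^T P*(λ̂) with P*(λ̂) a maximizer of λ̂^T P. Consequently regret(λ̂, λ) ≤ inf_α { max_{P ∈ Φ} (α λ̂ - λ)^T P - α c*(λ̂) } + c*(λ). -/
/-- Dot product on `Fin n → ℝ`. -/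
def dotp {n : ℕ} (c P : Fin n → ℝ) : ℝ := ∑ i, c i * P i

theorem regret_upper_bound
    {n : ℕ} (Φ : Set (Fin n → ℝ)) (hcomp : IsCompact Φ) (hne : Φ.Nonempty)
    (lamh lam : Fin n → ℝ)
    (Plam : Fin n → ℝ) (hPlam : Plam ∈ Φ)
    (hPlammax : ∀ P ∈ Φ, dotp lam P ≤ dotp lam Plam)
    (Plamh : Fin n → ℝ) (hPlamh : Plamh ∈ Φ)
    (hPlamhmax : ∀ P ∈ Φ, dotp lamh P ≤ dotp lamh Plamh)
    (cstarlam cstarlamh : ℝ)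
    (hcl : cstarlam = dotp lam Plam) (hclh : cstarlamh = dotp lamh Plamh) :
    (∀ α : ℝ,
      dotp lam Plam - dotp lam Plamh ≤
        sSup ((fun P => dotp (α • lamh - lam) P) '' Φ) - α * cstarlamh + cstarlam) ∧
    dotp lam Plam - dotp lam Plamh ≤
      (⨅ α : ℝ, (sSup ((fun P => dotp (α • lamh - lam) P) '' Φ) - α * cstarlamh))
        + cstarlam := by
  have hmain : ∀ α : ℝ,
      dotp lam Plam - dotp lam Plamh ≤
        sSup ((fun P => dotp (α • lamh - lam) P) '' Φ) - α * cstarlamh + cstarlam := by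
    intro α
    have hcont : Continuous (fun P : Fin n → ℝ => dotp (α • lamh - lam) P) := by
      unfold dotp
      exact continuous_finset_sum _ (fun i _ => (continuous_const.mul (continuous_apply i)))
    have hbdd : BddAbove ((fun P => dotp (α • lamh - lam) P) '' Φ) :=
      (hcomp.image hcont).bddAbove
    have hle : dotp (α • lamh - lam) Plamh ≤
        sSup ((fun P => dotp (α • lamh - lam) P) '' Φ) :=
      le_csSup hbdd ⟨Plamh, hPlamh, rfl⟩
    have hexp : dotp (α • lamh - lam) Plamh
        = α * dotp lamh Plamh - dotp lam Plamh := by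
      simp only [dotp, Pi.sub_apply, Pi.smul_apply, smul_eq_mul, sub_mul,
        Finset.sum_sub_distrib, Finset.mul_sum]
      ring_nf
    rw [hcl, hclh]
    rw [hexp] at hle
    linarith
  refine ⟨hmain, ?_⟩
  have : dotp lam Plam - dotp lam Plamh - cstarlam ≤
      ⨅ α : ℝ, (sSup ((fun P => dotp (α • lamh - lam) P) '' Φ) - α * cstarlamh) :=
    le_ciInf (fun α => by linarith [hmain α])
  linarith
end

section
/- For two predicted prices with equal prediction error: there exist a compact polytope Φ ⊂ R², a true price λ ∈ R², and predictions λ̂₁, λ̂₂ ∈ R² with ‖λ̂₁ - λ‖ = ‖λ̂₂ - λ‖, such that regret(λ̂₁, λ) = 0 but regret(λ̂₂, λ) > 0; i.e., equal prediction errors can produce different decision errors. -/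
def dotp2 (c P : EuclideanSpace ℝ (Fin 2)) : ℝ := ∑ i, c i * P i

noncomputable def e2 (a b : ℝ) : EuclideanSpace ℝ (Fin 2) := (WithLp.equiv 2 _).symm ![a, b]

lemma dotp2_smul (a b t : ℝ) : dotp2 (e2 a b) (t • e2 1 1) = t * (a + b) := by
  simp [dotp2, Fin.sum_univ_two, e2, PiLp.smul_apply, smul_eq_mul]; ring

lemma mem_seg {x : EuclideanSpace ℝ (Fin 2)} (hx : x ∈ segment ℝ 0 (e2 1 1)) :
    ∃ t : ℝ, 0 ≤ t ∧ t ≤ 1 ∧ x = t • e2 1 1 := by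
  rw [segment_eq_image] at hx
  obtain ⟨t, ht, hxt⟩ := hx
  exact ⟨t, ht.1, ht.2, by simpa using hxt.symm⟩

lemma smul_mem_seg {t : ℝ} (h0 : 0 ≤ t) (h1 : t ≤ 1) :
    t • e2 1 1 ∈ segment ℝ 0 (e2 1 1) := by
  rw [segment_eq_image]
  exact ⟨t, ⟨h0, h1⟩, by simp⟩

theorem equal_prediction_error_different_regret :
    ∃ (Φ : Set (EuclideanSpace ℝ (Fin 2)))
      (lam lamh₁ lamh₂ : EuclideanSpace ℝ (Fin 2)),
      IsCompact Φ ∧ Φ.Nonempty ∧ Convex ℝ Φ ∧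
      ‖lamh₁ - lam‖ = ‖lamh₂ - lam‖ ∧
      (∀ Plam ∈ Φ, (∀ P ∈ Φ, dotp2 lam P ≤ dotp2 lam Plam) →
        (∀ P1 ∈ Φ, (∀ P ∈ Φ, dotp2 lamh₁ P ≤ dotp2 lamh₁ P1) →
          dotp2 lam Plam - dotp2 lam P1 = 0) ∧
        (∀ P2 ∈ Φ, (∀ P ∈ Φ, dotp2 lamh₂ P ≤ dotp2 lamh₂ P2) →
          0 < dotp2 lam Plam - dotp2 lam P2)) := by
  refine ⟨segment ℝ 0 (e2 1 1), e2 1 1, e2 3 0, e2 (-1) 0,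
    (by rw [segment_eq_image]; exact isCompact_Icc.image (by continuity)), ⟨_, left_mem_segment ℝ _ _⟩, convex_segment _ _, ?_, ?_⟩
  · -- norms: (2,-1) vs (-2,-1)
    have h1 : e2 3 0 - e2 1 1 = e2 2 (-1) := by
      ext i; fin_cases i <;> simp [e2] <;> norm_num
    have h2 : e2 (-1) 0 - e2 1 1 = e2 (-2) (-1) := by
      ext i; fin_cases i <;> simp [e2] <;> norm_num
    rw [h1, h2]
    rw [EuclideanSpace.norm_eq, EuclideanSpace.norm_eq]
    simp [Fin.sum_univ_two, e2]
  · intro Plam hPlam hmax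
    obtain ⟨s, hs0, hs1, rfl⟩ := mem_seg hPlam
    have hval : dotp2 (e2 1 1) (s • e2 1 1) = 2 := by
      have h2 := hmax _ (smul_mem_seg zero_le_one (le_refl (1:ℝ)))
      simp only [dotp2_smul] at h2 ⊢
      nlinarith
    rw [hval]
    constructor
    · intro P1 hP1 hmax1
      obtain ⟨t, ht0, ht1, rfl⟩ := mem_seg hP1
      have h2 := hmax1 _ (smul_mem_seg zero_le_one (le_refl (1:ℝ)))
      simp only [dotp2_smul] at h2 ⊢
      nlinarith
    · intro P2 hP2 hmax2
      obtain ⟨t, ht0, ht1, rfl⟩ := mem_seg hP2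
      have h2 := hmax2 _ (smul_mem_seg (le_refl (0:ℝ)) zero_le_one)
      simp only [dotp2_smul] at h2 ⊢
      nlinarith
end
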